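/- arXiv:1707.09793 — 3 statements merged into one kernel-verified Lean document; each statement's English description precedes it below -/
import Mathlib

section
/- (Interchange Lemma) Let M be a k-permutable monoid and let L ∈ 𝔏_Rat(M). Then there exists a positive integer m such that for every word w ∈ L and every factorization w = w₁w₂⋯w_m with |wᵢ| ≥ 1 for 1 ≤ i ≤ m, there exist integers 0 ≤ i₀ < i₁ < ⋯ < i_k ≤ m such that, setting λ = w₁⋯w_{i₀}, W_j = w_{i_{j-1}+1}⋯w_{i_j} for j = 1,…,k, and μ = w_{i_k+1}⋯w_m (with λ = ε when i₀ = 0 and μ = ε when i_k = m), there is a permutation σ of {1,…,k} different from the identity for which the word w_σ = λ W_{σ(1)} W_{σ(2)} ⋯ W_{σ(k)} μ belongs to L. -/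
open scoped Pointwise

/-- A semigroup/monoid `M` is `n`-permutable: for every sequence of `n` elements there is a
non-identity permutation `σ` of `{1,…,n}` leaving the product unchanged. -/
def NPermutable (M : Type) [Monoid M] (n : ℕ) : Prop :=
  ∀ s : Fin n → M, ∃ σ : Equiv.Perm (Fin n), σ ≠ 1 ∧
    (List.ofFn s).prod = (List.ofFn fun i => s (σ i)).prod

/-- `M` is permutable if it is `n`-permutable for some `n ≥ 2`. -/
def Permutable (M : Type) [Monoid M] : Prop :=
  ∃ n : ℕ, 2 ≤ n ∧ NPermutable M n

/-- `M` is an inverse monoid: every element has a unique inverse in the sense of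
inverse semigroup theory. -/
def IsInverseMonoid (M : Type) [Monoid M] : Prop :=
  ∀ m : M, ∃! m' : M, m * m' * m = m ∧ m' * m * m' = m'

/-- The rational subsets of a monoid: the closure of the finite subsets under
union, (pointwise) product and Kleene star (i.e. generated submonoid). -/
inductive IsRatSet {M : Type} [Monoid M] : Set M → Prop
  | of_finite (S : Set M) : S.Finite → IsRatSet S
  | union (S T : Set M) : IsRatSet S → IsRatSet T → IsRatSet (S ∪ T)
  | mul (S T : Set M) : IsRatSet S → IsRatSet T → IsRatSet (S * T)
  | star (S : Set M) : IsRatSet S → IsRatSet (Submonoid.closure S : Set M)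

/-- A rational monoid automaton over `M` with input alphabet `α`: a nondeterministic
finite automaton whose transitions (on letters or on `ε`, encoded by `none`) are labeled
by elements of `M`, together with rational initial and terminal sets `I0, I1 ⊆ M`. -/
structure RatMonoidAutomaton (α : Type) (M : Type) [Monoid M] where
  Q : Type
  fintypeQ : Fintype Q
  start : Q
  accept : Set Q
  step : Q → Option α → Set (Q × M)
  I0 : Set M
  I1 : Set M
  ratI0 : IsRatSet I0
  ratI1 : IsRatSet I1

namespace RatMonoidAutomaton

variable {α M : Type} [Monoid M]

/-- `A.Reaches q w m q'` holds if there is a computation of `A` from state `q` to state `q'`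
reading the word `w` (with `ε`-moves allowed) whose product of labels is `m`. -/
inductive Reaches (A : RatMonoidAutomaton α M) : A.Q → List α → M → A.Q → Prop
  | refl (q : A.Q) : Reaches A q [] 1 q
  | letter {q q' q'' : A.Q} {a : α} {w : List α} {m m' : M} :
      (q', m) ∈ A.step q (some a) → Reaches A q' w m' q'' →
      Reaches A q (a :: w) (m * m') q''
  | eps {q q' q'' : A.Q} {w : List α} {m m' : M} :
      (q', m) ∈ A.step q none → Reaches A q' w m' q'' →
      Reaches A q w (m * m') q''

/-- The language accepted by a rational monoid automaton: `w` is accepted if some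
computation on `w` from the initial state to an accepting state has label product `x`
with `x₀ * x ∈ I1` for some `x₀ ∈ I0`. -/
def lang (A : RatMonoidAutomaton α M) : Language α :=
  { w | ∃ q ∈ A.accept, ∃ m : M, A.Reaches A.start w m q ∧ ∃ x0 ∈ A.I0, x0 * m ∈ A.I1 }

end RatMonoidAutomaton

/-- `𝔏_Rat(M)`: the family of languages over the alphabet `α` accepted by rational
monoid automata over `M`. -/
def LRat (α : Type) (M : Type) [Monoid M] : Set (Language α) :=
  { L | ∃ A : RatMonoidAutomaton α M, A.lang = L }


section InterchangeAux

variable {α M : Type} [Monoid M] {A : RatMonoidAutomaton α M}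

/-- Product of labels `x i` for `i` in the interval `[i, j)`. -/
def segProd (x : ℕ → M) (i j : ℕ) : M := ((List.range' i (j - i)).map x).prod

lemma segProd_self (x : ℕ → M) (i : ℕ) : segProd x i i = 1 := by
  simp [segProd]

lemma segProd_mul {x : ℕ → M} {i j l : ℕ} (hij : i ≤ j) (hjl : j ≤ l) :
    segProd x i j * segProd x j l = segProd x i l := by
  unfold segProd
  rw [← List.prod_append, ← List.map_append]
  have h := List.range'_append (s := i) (m := j - i) (n := l - j) (step := 1)
  rw [one_mul, Nat.add_sub_cancel' hij] at h
  have hc : (j - i) + (l - j) = l - i := by omega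
  rw [hc] at h
  rw [h]

lemma segProd_single (x : ℕ → M) (j : ℕ) : segProd x j (j + 1) = x j := by
  have h1 : j + 1 - j = 1 := by omega
  simp [segProd, h1]

namespace RatMonoidAutomaton

theorem reaches_append {q q' q'' : A.Q} {u v : List α} {m1 m2 : M}
    (h1 : A.Reaches q u m1 q') (h2 : A.Reaches q' v m2 q'') :
    A.Reaches q (u ++ v) (m1 * m2) q'' := by
  induction h1 with
  | refl q => simpa using h2
  | letter hs _ ih => rw [List.cons_append, mul_assoc]; exact Reaches.letter hs (ih h2)
  | eps hs _ ih => rw [mul_assoc]; exact Reaches.eps hs (ih h2)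

theorem reaches_split {q q'' : A.Q} {w : List α} {m : M} (h : A.Reaches q w m q'') :
    ∀ u v, w = u ++ v →
      ∃ q' m1 m2, m = m1 * m2 ∧ A.Reaches q u m1 q' ∧ A.Reaches q' v m2 q'' := by
  induction h with
  | refl q =>
    rintro u v huv
    obtain ⟨rfl, rfl⟩ : u = [] ∧ v = [] := by
      constructor <;> [exact (List.append_eq_nil_iff.mp huv.symm).1;
        exact (List.append_eq_nil_iff.mp huv.symm).2]
    exact ⟨q, 1, 1, (one_mul 1).symm, Reaches.refl q, Reaches.refl q⟩
  | @letter q q' q'' a w m m' hs hr ih =>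
    rintro u v huv
    cases u with
    | nil =>
      refine ⟨q, 1, m * m', (one_mul _).symm, Reaches.refl q, ?_⟩
      simp only [List.nil_append] at huv
      rw [← huv]
      exact Reaches.letter hs hr
    | cons b u' =>
      simp only [List.cons_append, List.cons.injEq] at huv
      obtain ⟨rfl, huv⟩ := huv
      obtain ⟨qm, m1, m2, hm, h1, h2⟩ := ih u' v huv
      exact ⟨qm, m * m1, m2, by rw [hm, mul_assoc], Reaches.letter hs h1, h2⟩
  | @eps q q' q'' w m m' hs hr ih =>
    rintro u v huv
    obtain ⟨qm, m1, m2, hm, h1, h2⟩ := ih u v huv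
    exact ⟨qm, m * m1, m2, by rw [hm, mul_assoc], Reaches.eps hs h1, h2⟩

theorem reaches_decomp {q'' : A.Q} :
    ∀ (ws : List (List α)) (q : A.Q) (m : M), A.Reaches q ws.flatten m q'' →
      ∃ (p : ℕ → A.Q) (x : ℕ → M) (e : M), p 0 = q ∧
        m = segProd x 0 ws.length * e ∧
        A.Reaches (p ws.length) [] e q'' ∧
        ∀ i < ws.length, A.Reaches (p i) (ws.getD i []) (x i) (p (i + 1)) := by
  intro ws
  induction ws with
  | nil =>
    intro q m h
    refine ⟨fun _ => q, fun _ => 1, m, rfl, by simp [segProd_self], ?_, by simp⟩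
    simpa using h
  | cons w t ih =>
    intro q m h
    have h' : A.Reaches q (w ++ t.flatten) m q'' := by simpa using h
    obtain ⟨q1, m1, m2, rfl, h1, h2⟩ := reaches_split h' w t.flatten rfl
    obtain ⟨p, x, e, hp0, hm2, he, hsteps⟩ := ih q1 m2 h2
    refine ⟨fun i => match i with | 0 => q | (i+1) => p i,
            fun i => match i with | 0 => m1 | (i+1) => x i, e, rfl, ?_, he, ?_⟩
    · rw [hm2, ← mul_assoc]
      congr 1
      show m1 * segProd x 0 t.length = _
      unfold segProd
      simp only [Nat.sub_zero, List.length_cons]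
      rw [List.range'_succ]
      simp only [List.map_cons, List.prod_cons]
      congr 1
      have hmap : (List.range' (0 + 1) t.length).map
          (fun i => (match i with | 0 => m1 | (i+1) => x i : M)) =
          (List.range' 0 t.length).map x := by
        have h0 : List.range' (0 + 1) t.length = (List.range' 0 t.length).map (· + 1) := by
          rw [List.range'_eq_map_range, List.range'_eq_map_range, List.map_map]
          apply List.map_congr_left
          intro i _
          simp [Nat.add_comm]
        rw [h0, List.map_map]
        apply List.map_congr_left
        intro i _
        rfl
      exact (congrArg List.prod hmap).symm
    · intro i hi
      match i with
      | 0 =>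
        show A.Reaches q ((w :: t).getD 0 []) m1 (p 0)
        rw [hp0]
        exact h1
      | (i+1) =>
        have hi' : i < t.length := by simpa using hi
        simpa using hsteps i hi'

theorem reaches_seg {p : ℕ → A.Q} {x : ℕ → M} {ws : List (List α)}
    (hsteps : ∀ i < ws.length, A.Reaches (p i) (ws.getD i []) (x i) (p (i + 1))) :
    ∀ i j, i ≤ j → j ≤ ws.length →
      A.Reaches (p i) ((ws.drop i).take (j - i)).flatten (segProd x i j) (p j) := by
  intro i j hij
  induction j, hij using Nat.le_induction with
  | base =>
    intro _
    simpa [segProd_self] using Reaches.refl (p i)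
  | succ j hij ih =>
    intro hj1
    have hjlen : j < ws.length := by omega
    have ihh := ih (by omega)
    have hcomp := reaches_append ihh (hsteps j hjlen)
    have hlist : ((ws.drop i).take (j - i)).flatten ++ ws.getD j [] =
        ((ws.drop i).take (j + 1 - i)).flatten := by
      have h1 : j + 1 - i = (j - i) + 1 := by omega
      rw [h1, List.take_succ]
      have h2 : (ws.drop i)[j - i]? = some (ws.getD j []) := by
        rw [List.getElem?_drop]
        have h3 : i + (j - i) = j := by omega
        rw [h3, List.getElem?_eq_getElem hjlen, List.getD_eq_getElem ws [] hjlen]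
      rw [h2]
      simp
    have hprod : segProd x i j * x j = segProd x i (j + 1) := by
      rw [← segProd_single x j]
      exact segProd_mul hij (by omega)
    rw [hlist, hprod] at hcomp
    exact hcomp

theorem reaches_loop {q : A.Q} {k : ℕ} {W : Fin k → List α} {c : Fin k → M}
    (h : ∀ j, A.Reaches q (W j) (c j) q) :
    ∀ l : List (Fin k), A.Reaches q (l.map W).flatten ((l.map c).prod) q := by
  intro l
  induction l with
  | nil => simpa using Reaches.refl q
  | cons a t ih => simpa using reaches_append (h a) ih

end RatMonoidAutomaton

lemma segProd_telescope {x : ℕ → M} :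
    ∀ {k : ℕ} (g : Fin (k + 1) → ℕ), Monotone g →
      (List.ofFn fun j : Fin k => segProd x (g j.castSucc) (g j.succ)).prod =
        segProd x (g 0) (g (Fin.last k)) := by
  intro k
  induction k with
  | zero =>
    intro g _
    have h0 : Fin.last 0 = 0 := rfl
    simp [h0, segProd_self]
  | succ k ih =>
    intro g hg
    rw [List.ofFn_succ]
    simp only [List.prod_cons]
    have h2 := ih (fun j => g j.succ) (fun a b hab => hg (Fin.succ_le_succ_iff.mpr hab))
    simp only [Fin.succ_castSucc] at h2
    rw [h2]
    have e1 : (0 : Fin (k + 1)).castSucc = (0 : Fin (k + 2)) := rfl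
    have e2 : ((0 : Fin (k + 1)) : Fin (k+1)).succ = (1 : Fin (k + 2)) := rfl
    have e3 : (Fin.last k).succ = Fin.last (k + 1) := Fin.succ_last k
    rw [e1, e3]
    exact segProd_mul (hg (Fin.zero_le _)) (hg (Fin.le_last _))

end InterchangeAux

/-- **Interchange Lemma.** Let `M` be a `k`-permutable monoid and
`L ∈ 𝔏_Rat(M)`. Then there is a positive integer `m` such that for every word of `L`
factorized as `w = w₁w₂⋯w_m` into `m` nonempty factors (given by the list `ws`), there
are indices `0 ≤ i₀ < i₁ < ⋯ < i_k ≤ m` (given by the strictly monotone `f`) such that,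
setting `λ = w₁⋯w_{i₀}`, `W_j = w_{i_{j-1}+1}⋯w_{i_j}` and `μ = w_{i_k+1}⋯w_m`, some
non-identity permutation `σ` of `{1,…,k}` yields `λ W_{σ(1)} ⋯ W_{σ(k)} μ ∈ L`. -/
theorem interchange_lemma
    (M : Type) [Monoid M] (k : ℕ) (hk : 2 ≤ k) (hperm : NPermutable M k)
    (α : Type) (L : Language α) (hL : L ∈ LRat α M) :
    ∃ m : ℕ, 0 < m ∧
      ∀ ws : List (List α), ws.length = m → (∀ u ∈ ws, u ≠ []) → ws.flatten ∈ L →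
        ∃ f : Fin (k + 1) → ℕ, StrictMono f ∧ f (Fin.last k) ≤ m ∧
          ∃ σ : Equiv.Perm (Fin k), σ ≠ 1 ∧
            (ws.take (f 0)).flatten ++
                (List.ofFn fun j : Fin k =>
                  ((ws.take (f (σ j).succ)).drop (f (σ j).castSucc)).flatten).flatten ++
              (ws.drop (f (Fin.last k))).flatten ∈ L := by
  classical
  obtain ⟨A, rfl⟩ := hL
  letI := A.fintypeQ
  haveI : Nonempty A.Q := ⟨A.start⟩
  refine ⟨k * Fintype.card A.Q, Nat.mul_pos (by omega) Fintype.card_pos, ?_⟩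
  intro ws hlen _ hw
  obtain ⟨qf, hqf, mtot, hrun, x0, hx0, hI1⟩ := hw
  obtain ⟨p, x, e, hp0, hmtot, he, hsteps⟩ :=
    RatMonoidAutomaton.reaches_decomp (A := A) ws A.start mtot hrun
  -- pigeonhole: some state occurs at least k+1 times among the k*|Q|+1 cut positions
  have hcard : Fintype.card A.Q * k <
      Fintype.card (Fin (k * Fintype.card A.Q + 1)) := by
    rw [Fintype.card_fin, Nat.mul_comm]
    exact Nat.lt_succ_self _
  obtain ⟨qs, hqs⟩ := Fintype.exists_lt_card_fiber_of_mul_lt_card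
    (fun i : Fin (k * Fintype.card A.Q + 1) => p ↑i) hcard
  obtain ⟨t, hts, htcard⟩ := Finset.exists_subset_card_eq hqs
  set emb := t.orderEmbOfFin htcard with hemb
  set f : Fin (k + 1) → ℕ := fun j => ((emb j : Fin (k * Fintype.card A.Q + 1)) : ℕ) with hf
  have hfmono : StrictMono f := fun a b hab => by
    exact_mod_cast emb.strictMono hab
  have hfq : ∀ j, p (f j) = qs := by
    intro j
    have hmem := hts (Finset.orderEmbOfFin_mem t htcard j)
    exact (Finset.mem_filter.mp hmem).2
  have hfle : ∀ j, f j ≤ k * Fintype.card A.Q := fun j => Nat.lt_succ_iff.mp (emb j).isLt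
  -- segments
  set W : Fin k → List α :=
    fun j => ((ws.drop (f j.castSucc)).take (f j.succ - f j.castSucc)).flatten with hW
  set c : Fin k → M := fun j => segProd x (f j.castSucc) (f j.succ) with hc
  have hWloop : ∀ j, A.Reaches qs (W j) (c j) qs := by
    intro j
    have h := RatMonoidAutomaton.reaches_seg hsteps (f j.castSucc) (f j.succ)
      (le_of_lt (hfmono (Fin.castSucc_lt_succ (i := j)))) (by rw [hlen]; exact hfle _)
    rw [hfq j.castSucc, hfq j.succ] at h
    exact h
  obtain ⟨σ, hσ1, hσprod⟩ := hperm c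
  -- the three runs
  have hlam := RatMonoidAutomaton.reaches_seg hsteps 0 (f 0) (Nat.zero_le _)
    (by rw [hlen]; exact hfle 0)
  simp only [List.drop_zero, Nat.sub_zero] at hlam
  rw [hp0, hfq 0] at hlam
  have hmid := RatMonoidAutomaton.reaches_loop hWloop (List.ofFn σ)
  have hmu := RatMonoidAutomaton.reaches_seg hsteps (f (Fin.last k)) ws.length
    (by rw [hlen]; exact hfle _) le_rfl
  have htake : (ws.drop (f (Fin.last k))).take (ws.length - f (Fin.last k)) =
      ws.drop (f (Fin.last k)) := List.take_of_length_le (by simp)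
  rw [htake, hfq (Fin.last k)] at hmu
  have hmu' := RatMonoidAutomaton.reaches_append hmu he
  have total := RatMonoidAutomaton.reaches_append
    (RatMonoidAutomaton.reaches_append hlam hmid) hmu'
  rw [List.append_nil, List.map_ofFn, List.map_ofFn] at total
  -- label bookkeeping
  have hmono : Monotone f := hfmono.monotone
  have h0f : (0 : ℕ) ≤ f 0 := Nat.zero_le _
  have hff : f 0 ≤ f (Fin.last k) := hmono (Fin.zero_le _)
  have hflen : f (Fin.last k) ≤ ws.length := by rw [hlen]; exact hfle _
  have htel := segProd_telescope (x := x) f hmono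
  have hσeq : (List.ofFn (c ∘ σ)).prod = segProd x (f 0) (f (Fin.last k)) := by
    calc (List.ofFn (c ∘ σ)).prod = (List.ofFn c).prod := hσprod.symm
      _ = segProd x (f 0) (f (Fin.last k)) := htel
  have e1 : segProd x 0 (f 0) * segProd x (f 0) (f (Fin.last k)) =
      segProd x 0 (f (Fin.last k)) := segProd_mul h0f hff
  have e2 : segProd x 0 (f (Fin.last k)) * segProd x (f (Fin.last k)) ws.length =
      segProd x 0 ws.length := segProd_mul (le_trans h0f hff) hflen
  have hlabel : mtot = segProd x 0 (f 0) * (List.ofFn (c ∘ σ)).prod *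
      (segProd x (f (Fin.last k)) ws.length * e) := by
    calc mtot = segProd x 0 ws.length * e := hmtot
      _ = (segProd x 0 (f (Fin.last k)) * segProd x (f (Fin.last k)) ws.length) * e := by
          rw [e2]
      _ = ((segProd x 0 (f 0) * segProd x (f 0) (f (Fin.last k))) *
            segProd x (f (Fin.last k)) ws.length) * e := by rw [e1]
      _ = segProd x 0 (f 0) * (List.ofFn (c ∘ σ)).prod *
            (segProd x (f (Fin.last k)) ws.length * e) := by
          rw [hσeq, mul_assoc (segProd x 0 (f 0) * segProd x (f 0) (f (Fin.last k)))]
  -- assemble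
  refine ⟨f, hfmono, hfle (Fin.last k), σ, hσ1, ?_⟩
  have hmidword : (List.ofFn fun j : Fin k =>
      ((ws.take (f (σ j).succ)).drop (f (σ j).castSucc)).flatten) = List.ofFn (W ∘ σ) := by
    refine congrArg List.ofFn (funext fun j => ?_)
    show ((ws.take (f (σ j).succ)).drop (f (σ j).castSucc)).flatten = W (σ j)
    rw [hW]
    simp only [List.drop_take]
  rw [hmidword]
  exact ⟨qf, hqf, _, total, x0, hx0, by rw [← hlabel]; exact hI1⟩
end

section
/- Let M be a finitely generated permutable monoid. Then the language L₁* = ({aⁿbⁿ : n ≥ 1})* over the alphabet {a, b} does not belong to 𝔏_Rat(M). -/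
open scoped Pointwise

/-- The language `L₁ = {aⁿbⁿ : n ≥ 1}` over the two-letter alphabet `Fin 2`
(where `a = 0` and `b = 1`). -/
def LangL1 : Language (Fin 2) :=
  { w | ∃ n : ℕ, 1 ≤ n ∧ w = List.replicate n 0 ++ List.replicate n 1 }


namespace L1Aux

lemma head?_rep {α : Type} (x : α) {k : ℕ} (hk : 1 ≤ k) (l : List α) :
    (List.replicate k x ++ l).head? = some x := by
  cases k with
  | zero => omega
  | succ k => simp [List.replicate_succ]

lemma repl_eq {α : Type} {x : α} : ∀ (m p : ℕ) {A B : List α},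
    A.head? ≠ some x → B.head? ≠ some x →
    List.replicate m x ++ A = List.replicate p x ++ B → m = p ∧ A = B := by
  intro m
  induction m with
  | zero =>
    intro p A B hA hB h
    cases p with
    | zero => simpa using h
    | succ p =>
      rw [List.replicate_succ] at h
      simp only [List.replicate_zero, List.nil_append, List.cons_append] at h
      exact absurd (by rw [h]; rfl) hA
  | succ m ih =>
    intro p A B hA hB h
    cases p with
    | zero =>
      rw [List.replicate_succ] at h
      simp only [List.replicate_zero, List.nil_append, List.cons_append] at h
      exact absurd (by rw [← h]; rfl) hB
    | succ p =>
      rw [List.replicate_succ, List.replicate_succ] at h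
      simp only [List.cons_append, List.cons.injEq, true_and] at h
      obtain ⟨h1, h2⟩ := ih p hA hB h
      exact ⟨by omega, h2⟩

def chunk (x : ℕ × ℕ) : List (Fin 2) :=
  List.replicate x.1 0 ++ List.replicate x.2 1

def cjoin (l : List (ℕ × ℕ)) : List (Fin 2) := (l.map chunk).flatten

@[simp] lemma cjoin_nil : cjoin [] = [] := rfl

lemma cjoin_cons (x : ℕ × ℕ) (l : List (ℕ × ℕ)) :
    cjoin (x :: l) = List.replicate x.1 0 ++ (List.replicate x.2 1 ++ cjoin l) := by
  simp [cjoin, chunk]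

lemma kstar_head {v : List (Fin 2)} (hv : v ∈ KStar.kstar LangL1) :
    v = [] ∨ v.head? = some 0 := by
  rw [Language.mem_kstar] at hv
  obtain ⟨L, rfl, hL⟩ := hv
  cases L with
  | nil => exact Or.inl rfl
  | cons y t =>
    right
    obtain ⟨k, hk, rfl⟩ := hL y (List.mem_cons_self)
    rw [List.flatten_cons, List.append_assoc, head?_rep _ hk]

lemma peel {p q : ℕ} {u : List (Fin 2)} (hp : 1 ≤ p) (hq : 1 ≤ q)
    (hu : u = [] ∨ u.head? = some 0)
    (h : List.replicate p 0 ++ (List.replicate q 1 ++ u) ∈ KStar.kstar LangL1) :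
    p = q ∧ u ∈ KStar.kstar LangL1 := by
  rw [Language.mem_kstar] at h
  obtain ⟨L, hLe, hL⟩ := h
  cases L with
  | nil =>
    exfalso
    apply_fun List.length at hLe
    simp at hLe
    omega
  | cons y t =>
    obtain ⟨k, hk, rfl⟩ := hL y (List.mem_cons_self)
    have htmem : t.flatten ∈ KStar.kstar LangL1 :=
      Language.join_mem_kstar fun z hz => hL z (List.mem_cons_of_mem _ hz)
    rw [List.flatten_cons, List.append_assoc] at hLe
    have hhead1 : ∀ (w : List (Fin 2)), w = [] ∨ w.head? = some 0 →
        (List.replicate k (1 : Fin 2) ++ w).head? ≠ some 0 → True := fun _ _ _ => trivial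
    have h1 : (List.replicate k (1 : Fin 2) ++ t.flatten).head? ≠ some (0 : Fin 2) := by
      rw [head?_rep _ hk]; simp
    have h2 : (List.replicate q (1 : Fin 2) ++ u).head? ≠ some (0 : Fin 2) := by
      rw [head?_rep _ hq]; simp
    obtain ⟨hkp, hrest⟩ := repl_eq k p h1 h2 hLe.symm
    have h3 : (t.flatten).head? ≠ some (1 : Fin 2) := by
      rcases kstar_head htmem with h | h
      · rw [h]; simp
      · rw [h]; simp
    have h4 : u.head? ≠ some (1 : Fin 2) := by
      rcases hu with h | h
      · rw [h]; simp
      · rw [h]; simp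
    obtain ⟨hkq, hru⟩ := repl_eq k q h3 h4 hrest
    subst hru
    exact ⟨by omega, htmem⟩

lemma cjoin_head (l : List (ℕ × ℕ)) (hl : ∀ x ∈ l, 1 ≤ x.1) :
    cjoin l = [] ∨ (cjoin l).head? = some 0 := by
  cases l with
  | nil => exact Or.inl rfl
  | cons y t =>
    right
    rw [cjoin_cons, head?_rep _ (hl y (List.mem_cons_self))]

lemma mainComb : ∀ l : List (ℕ × ℕ), (∀ x ∈ l, 1 ≤ x.1 ∧ 1 ≤ x.2) →
    cjoin l ∈ KStar.kstar LangL1 → ∀ x ∈ l, x.1 = x.2 := by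
  intro l
  induction l with
  | nil => intro _ _ x hx; simp at hx
  | cons y t ih =>
    intro hge hmem x hx
    rw [cjoin_cons] at hmem
    obtain ⟨hy1, hy2⟩ := hge y (List.mem_cons_self)
    have hth : cjoin t = [] ∨ (cjoin t).head? = some 0 :=
      cjoin_head t (fun z hz => (hge z (List.mem_cons_of_mem _ hz)).1)
    obtain ⟨heq, hrest⟩ := peel hy1 hy2 hth hmem
    rcases List.mem_cons.1 hx with rfl | hx
    · exact heq
    · exact ih (fun z hz => hge z (List.mem_cons_of_mem _ hz)) hrest x hx

lemma cjoin_mem (l : List (ℕ × ℕ)) (hl : ∀ x ∈ l, 1 ≤ x.1 ∧ x.1 = x.2) :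
    cjoin l ∈ KStar.kstar LangL1 := by
  apply Language.join_mem_kstar
  intro y hy
  rw [List.mem_map] at hy
  obtain ⟨x, hx, rfl⟩ := hy
  obtain ⟨h1, h2⟩ := hl x hx
  exact ⟨x.1, h1, by rw [chunk, h2]⟩

end L1Aux

namespace L1Aux

section Auto

variable {β Mo : Type} [Monoid Mo] (A : RatMonoidAutomaton β Mo)

lemma reaches_append {q q' q'' : A.Q} {u v : List β} {m m' : Mo}
    (h1 : A.Reaches q u m q') (h2 : A.Reaches q' v m' q'') :
    A.Reaches q (u ++ v) (m * m') q'' := by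
  induction h1 with
  | refl q => simpa using h2
  | letter hstep _ ih =>
    rw [List.cons_append, mul_assoc]
    exact RatMonoidAutomaton.Reaches.letter hstep (ih h2)
  | eps hstep _ ih =>
    rw [mul_assoc]
    exact RatMonoidAutomaton.Reaches.eps hstep (ih h2)

lemma reaches_split : ∀ {q q'' : A.Q} {m : Mo} {w : List β},
    A.Reaches q w m q'' → ∀ u v, w = u ++ v →
    ∃ q' m1 m2, m = m1 * m2 ∧ A.Reaches q u m1 q' ∧ A.Reaches q' v m2 q'' := by
  intro q q'' m w h
  induction h with
  | refl q =>
    intro u v huv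
    obtain ⟨hu, hv⟩ := List.append_eq_nil_iff.1 huv.symm
    subst hu; subst hv
    exact ⟨q, 1, 1, (one_mul 1).symm, RatMonoidAutomaton.Reaches.refl q,
      RatMonoidAutomaton.Reaches.refl q⟩
  | letter hstep hr ih =>
    rename_i q q1 q2 a w ma mb
    intro u v huv
    cases u with
    | nil =>
      rw [List.nil_append] at huv
      exact ⟨q, 1, ma * mb, (one_mul _).symm, RatMonoidAutomaton.Reaches.refl q,
        huv ▸ RatMonoidAutomaton.Reaches.letter hstep hr⟩
    | cons b u' =>
      rw [List.cons_append] at huv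
      obtain ⟨rfl, hw⟩ : a = b ∧ w = u' ++ v := by
        constructor
        · exact (List.cons.injEq _ _ _ _ ▸ huv).1
        · exact (List.cons.injEq _ _ _ _ ▸ huv).2
      obtain ⟨q3, m1, m2, hm, h1, h2⟩ := ih u' v hw
      exact ⟨q3, ma * m1, m2, by rw [hm, mul_assoc],
        RatMonoidAutomaton.Reaches.letter hstep h1, h2⟩
  | eps hstep hr ih =>
    rename_i q q1 q2 w me mi
    intro u v huv
    obtain ⟨q3, m1, m2, hm, h1, h2⟩ := ih u v huv
    exact ⟨q3, me * m1, m2, by rw [hm, mul_assoc],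
      RatMonoidAutomaton.Reaches.eps hstep h1, h2⟩

lemma chain_extract (C : ℕ → List β) :
    ∀ (k : ℕ) {q q' : A.Q} {m : Mo},
      A.Reaches q (((List.range' 0 k).map C).flatten) m q' →
      ∃ (st : ℕ → A.Q) (g : ℕ → Mo) (m0 : Mo),
        A.Reaches q [] m0 (st 0) ∧ st k = q' ∧
        (∀ t < k, A.Reaches (st t) (C t) (g t) (st (t+1))) ∧
        m = m0 * ((List.range' 0 k).map g).prod := by
  intro k
  induction k with
  | zero =>
    intro q q' m h
    simp only [List.range'_zero, List.map_nil, List.flatten_nil] at h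
    exact ⟨fun _ => q', fun _ => 1, m, h, rfl, fun t ht => absurd ht (by omega),
      by simp⟩
  | succ k ih =>
    intro q q' m h
    rw [List.range'_1_concat, List.map_append, List.flatten_append] at h
    obtain ⟨q1, m1, m2, hm, h1, h2⟩ := reaches_split A h _ _ rfl
    simp only [List.map_cons, List.map_nil, List.flatten_cons, List.flatten_nil,
      List.append_nil, Nat.zero_add] at h2
    obtain ⟨st, g, m0, hst0, hstk, hchain, hprod⟩ := ih h1
    refine ⟨fun t => if t = k + 1 then q' else st t,
            fun t => if t = k then m2 else g t, m0, ?_, ?_, ?_, ?_⟩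
    · simpa using hst0
    · simp
    · intro t ht
      rcases Nat.lt_succ_iff_lt_or_eq.1 ht with ht' | rfl
      · have e1 : (if t = k + 1 then q' else st t) = st t := if_neg (by omega)
        have e2 : (if t + 1 = k + 1 then q' else st (t+1)) = st (t+1) := if_neg (by omega)
        have e3 : (if t = k then m2 else g t) = g t := if_neg (by omega)
        simpa only [e1, e2, e3] using hchain t ht'
      · have e1 : (if t = t + 1 then q' else st t) = st t := if_neg (by omega)
        have e2 : (if t + 1 = t + 1 then q' else st (t+1)) = q' := if_pos rfl
        have e3 : (if t = t then m2 else g t) = m2 := if_pos rfl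
        have e4 : t ≠ t + 1 := by omega
        simpa [e4, hstk] using h2
    · rw [List.range'_1_concat, List.map_append, List.prod_append]
      have e0 : ∀ l : List ℕ, (∀ t ∈ l, t < k) →
          l.map (fun t => if t = k then m2 else g t) = l.map g := by
        intro l hl
        apply List.map_congr_left
        intro t ht
        exact if_neg (by have := hl t ht; omega)
      have e1 : (List.range' 0 k).map (fun t => if t = k then m2 else g t)
          = (List.range' 0 k).map g := by
        apply e0
        intro t ht
        have := List.mem_range'_1.1 ht
        omega
      rw [e1, hm, hprod, mul_assoc]
      simp

lemma chain_compose (C : ℕ → List β) {st : ℕ → A.Q} {g : ℕ → Mo} {K : ℕ}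
    (hchain : ∀ t < K, A.Reaches (st t) (C t) (g t) (st (t+1))) :
    ∀ (l u : ℕ), u + l ≤ K →
      A.Reaches (st u) (((List.range' u l).map C).flatten)
        (((List.range' u l).map g).prod) (st (u + l)) := by
  intro l
  induction l with
  | zero =>
    intro u _
    simpa using RatMonoidAutomaton.Reaches.refl (st u)
  | succ l ih =>
    intro u hu
    have h1 := ih u (by omega)
    have h2 := hchain (u + l) (by omega)
    have h3 := reaches_append A h1 h2
    rw [List.range'_1_concat, List.map_append, List.flatten_append, List.map_append,
      List.prod_append]
    simp only [List.map_cons, List.map_nil, List.flatten_cons, List.flatten_nil,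
      List.append_nil, List.prod_cons, List.prod_nil, mul_one]
    rw [← Nat.add_assoc]
    exact h3

lemma loops_join {y : A.Q} : ∀ (k : ℕ) (ws : Fin k → List β) (ms : Fin k → Mo),
    (∀ j, A.Reaches y (ws j) (ms j) y) →
    A.Reaches y (List.ofFn ws).flatten (List.ofFn ms).prod y := by
  intro k
  induction k with
  | zero =>
    intro ws ms _
    simpa using RatMonoidAutomaton.Reaches.refl y
  | succ k ih =>
    intro ws ms h
    rw [List.ofFn_succ, List.ofFn_succ, List.flatten_cons, List.prod_cons]
    exact reaches_append A (h 0) (ih _ _ (fun j => h j.succ))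

end Auto

end L1Aux

namespace L1Aux

/-- The "straddling" segment `b^{t+1} a^{t+2}`. -/
def Cw (t : ℕ) : List (Fin 2) := List.replicate (t+1) 1 ++ List.replicate (t+2) 0

/-- The matched block `a^{t+1} b^{t+1}`. -/
def blk (t : ℕ) : List (Fin 2) := List.replicate (t+1) 0 ++ List.replicate (t+1) 1

def JC (u l : ℕ) : List (Fin 2) := ((List.range' u l).map Cw).flatten

def BJ (u l : ℕ) : List (Fin 2) := ((List.range' u l).map blk).flatten

def pl (u l : ℕ) : List (ℕ × ℕ) := (List.range' u l).map (fun t => (t+1, t+1))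

lemma cjoin_pl (u l : ℕ) : cjoin (pl u l) = BJ u l := by
  simp only [cjoin, pl, BJ, List.map_map]
  rfl

lemma cjoin_append (l1 l2 : List (ℕ × ℕ)) : cjoin (l1 ++ l2) = cjoin l1 ++ cjoin l2 := by
  simp [cjoin]

lemma cjoin_flatten (L : List (List (ℕ × ℕ))) : cjoin L.flatten = (L.map cjoin).flatten := by
  induction L with
  | nil => rfl
  | cons x t ih => simp [cjoin_append, ih]

lemma JC_succ (u l : ℕ) : JC u (l+1) = Cw u ++ JC (u+1) l := by
  simp [JC, List.range'_succ]

lemma BJ_succ (u l : ℕ) : BJ u (l+1) = blk u ++ BJ (u+1) l := by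
  simp [BJ, List.range'_succ]

lemma W1 : ∀ (l u : ℕ), List.replicate (u+1) (0:Fin 2) ++ JC u l
    = BJ u l ++ List.replicate (u+l+1) 0 := by
  intro l
  induction l with
  | zero => intro u; simp [JC, BJ]
  | succ l ih =>
    intro u
    have h3 : u + (l+1) + 1 = (u+1) + l + 1 := by omega
    rw [JC_succ, BJ_succ, Cw, blk, h3]
    simp only [List.append_assoc]
    rw [← ih (u+1)]

lemma W2 : ∀ (l u : ℕ), JC u l ++ List.replicate (u+l+1) (1:Fin 2)
    = List.replicate (u+1) 1 ++ BJ (u+1) l := by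
  intro l
  induction l with
  | zero => intro u; simp [JC, BJ]
  | succ l ih =>
    intro u
    rw [JC_succ, BJ_succ, Cw, blk]
    have h3 : u + (l+1) + 1 = (u+1) + l + 1 := by omega
    rw [List.append_assoc, h3, ih (u+1)]
    simp [List.append_assoc]

lemma Wseg (l u : ℕ) : JC u (l+1)
    = List.replicate (u+1) 1 ++ (BJ (u+1) l ++ List.replicate (u+(l+1)+1) 0) := by
  rw [JC_succ, Cw]
  have h3 : u + (l+1) + 1 = (u+1) + l + 1 := by omega
  rw [h3, ← W1 l (u+1)]
  simp

lemma fold_seg : ∀ (k : ℕ) (seg items : Fin k → List (Fin 2)) (pa : Fin (k+1) → ℕ),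
    (∀ j : Fin k, List.replicate (pa j.castSucc) (0:Fin 2) ++ seg j
      = items j ++ List.replicate (pa j.succ) 0) →
    List.replicate (pa 0) (0:Fin 2) ++ (List.ofFn seg).flatten
      = (List.ofFn items).flatten ++ List.replicate (pa (Fin.last k)) 0 := by
  intro k
  induction k with
  | zero =>
    intro seg items pa _
    simp [Fin.last]
  | succ k ih =>
    intro seg items pa h
    have h0 := h 0
    rw [Fin.castSucc_zero] at h0
    have hrec := ih (fun j => seg j.succ) (fun j => items j.succ) (fun j => pa j.succ)
      (fun j => by
        have := h j.succ
        rwa [← Fin.succ_castSucc] at this)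
    rw [List.ofFn_succ, List.ofFn_succ (f := items), List.flatten_cons, List.flatten_cons,
      ← List.append_assoc, h0, List.append_assoc, hrec]
    rw [← List.append_assoc, Fin.succ_last]

end L1Aux

namespace L1Aux

lemma cjoin_cons' (x : ℕ × ℕ) (l : List (ℕ × ℕ)) : cjoin (x :: l) = chunk x ++ cjoin l := by
  simp [cjoin]

/-- The pending a-run exponent base before junction `j`. -/
def paF (n : ℕ) (d : Fin (n+1) → ℕ) (σ : Equiv.Perm (Fin n)) : Fin (n+1) → ℕ :=
  Fin.cases (d 0) (fun i => d (σ i).succ)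

@[simp] lemma paF_zero (n : ℕ) (d : Fin (n+1) → ℕ) (σ : Equiv.Perm (Fin n)) :
    paF n d σ 0 = d 0 := rfl

@[simp] lemma paF_succ (n : ℕ) (d : Fin (n+1) → ℕ) (σ : Equiv.Perm (Fin n)) (i : Fin n) :
    paF n d σ i.succ = d (σ i).succ := by
  simp [paF]

/-- The `j`-th permuted segment of the permuted word. -/
def segF (n : ℕ) (d : Fin (n+1) → ℕ) (σ : Equiv.Perm (Fin n)) (j : Fin n) : List (Fin 2) :=
  JC (d (σ j).castSucc) (d (σ j).succ - d (σ j).castSucc)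

def itemsF (n : ℕ) (d : Fin (n+1) → ℕ) (σ : Equiv.Perm (Fin n)) (j : Fin n) : List (Fin 2) :=
  chunk (paF n d σ j.castSucc + 1, d (σ j).castSucc + 1)
    ++ BJ (d (σ j).castSucc + 1) (d (σ j).succ - d (σ j).castSucc - 1)

def itemsPF (n : ℕ) (d : Fin (n+1) → ℕ) (σ : Equiv.Perm (Fin n)) (j : Fin n) : List (ℕ × ℕ) :=
  (paF n d σ j.castSucc + 1, d (σ j).castSucc + 1)
    :: pl (d (σ j).castSucc + 1) (d (σ j).succ - d (σ j).castSucc - 1)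

lemma cjoin_itemsPF (n : ℕ) (d : Fin (n+1) → ℕ) (σ : Equiv.Perm (Fin n)) (j : Fin n) :
    cjoin (itemsPF n d σ j) = itemsF n d σ j := by
  rw [itemsPF, itemsF, cjoin_cons', cjoin_pl]

def pairsF (n K : ℕ) (d : Fin (n+1) → ℕ) (σ : Equiv.Perm (Fin n)) : List (ℕ × ℕ) :=
  pl 0 (d 0) ++ ((List.ofFn (itemsPF n d σ)).flatten
    ++ ((paF n d σ (Fin.last n) + 1, d (Fin.last n) + 1)
        :: pl (d (Fin.last n) + 1) (K - d (Fin.last n))))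

lemma pl_ge (u l : ℕ) (x : ℕ × ℕ) (hx : x ∈ pl u l) : 1 ≤ x.1 ∧ 1 ≤ x.2 := by
  obtain ⟨t, _, rfl⟩ := List.mem_map.1 hx
  exact ⟨by omega, by omega⟩

/-- The key combinatorial step: if the permuted word is still in `L₁*`, then `σ = 1`. -/
lemma final_word (n K : ℕ) (d : Fin (n+1) → ℕ) (hd : StrictMono d)
    (hdK : ∀ j, d j ≤ K) (σ : Equiv.Perm (Fin n))
    (hmem : List.replicate 1 (0 : Fin 2) ++ (JC 0 (d 0)
      ++ ((List.ofFn (segF n d σ)).flatten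
        ++ (JC (d (Fin.last n)) (K - d (Fin.last n)) ++ List.replicate (K+1) 1)))
      ∈ KStar.kstar LangL1) :
    σ = 1 := by
  -- Step A : head
  have hstepA : List.replicate 1 (0 : Fin 2) ++ JC 0 (d 0)
      = BJ 0 (d 0) ++ List.replicate (d 0 + 1) 0 := by
    have h := W1 (d 0) 0
    simpa using h
  -- Step C : tail
  have hdlK : d (Fin.last n) ≤ K := hdK _
  have hstepC : JC (d (Fin.last n)) (K - d (Fin.last n)) ++ List.replicate (K+1) (1 : Fin 2)
      = List.replicate (d (Fin.last n) + 1) 1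
        ++ BJ (d (Fin.last n) + 1) (K - d (Fin.last n)) := by
    have h := W2 (K - d (Fin.last n)) (d (Fin.last n))
    rw [show d (Fin.last n) + (K - d (Fin.last n)) + 1 = K + 1 from by omega] at h
    exact h
  -- per-segment decomposition
  have hseg : ∀ j : Fin n,
      List.replicate (paF n d σ j.castSucc + 1) (0 : Fin 2) ++ segF n d σ j
        = itemsF n d σ j ++ List.replicate (paF n d σ j.succ + 1) 0 := by
    intro j
    have hlt : d (σ j).castSucc < d (σ j).succ := hd (Fin.castSucc_lt_succ)
    rw [segF, itemsF]
    set L := d (σ j).succ - d (σ j).castSucc - 1 with hL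
    rw [show d (σ j).succ - d (σ j).castSucc = L + 1 from by omega]
    rw [Wseg]
    rw [show d (σ j).castSucc + (L + 1) + 1 = d (σ j).succ + 1 from by omega]
    rw [paF_succ]
    simp [chunk, List.append_assoc]
  have hfold : List.replicate (d 0 + 1) (0 : Fin 2) ++ (List.ofFn (segF n d σ)).flatten
      = (List.ofFn (itemsF n d σ)).flatten
        ++ List.replicate (paF n d σ (Fin.last n) + 1) 0 :=
    fold_seg n (segF n d σ) (itemsF n d σ) (fun j => paF n d σ j + 1) hseg
  -- compute `cjoin pairsF`
  have hR : cjoin (pairsF n K d σ)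
      = BJ 0 (d 0) ++ ((List.ofFn (itemsF n d σ)).flatten
        ++ (chunk (paF n d σ (Fin.last n) + 1, d (Fin.last n) + 1)
            ++ BJ (d (Fin.last n) + 1) (K - d (Fin.last n)))) := by
    rw [pairsF, cjoin_append, cjoin_append, cjoin_flatten, cjoin_cons', cjoin_pl, cjoin_pl]
    congr 2
    rw [List.map_ofFn]
    have hcomp : (cjoin ∘ itemsPF n d σ) = itemsF n d σ :=
      funext fun j => cjoin_itemsPF n d σ j
    rw [hcomp]
  -- the permuted word equals `cjoin pairsF`
  have hw'eq : List.replicate 1 (0 : Fin 2) ++ (JC 0 (d 0)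
      ++ ((List.ofFn (segF n d σ)).flatten
        ++ (JC (d (Fin.last n)) (K - d (Fin.last n)) ++ List.replicate (K+1) 1)))
      = cjoin (pairsF n K d σ) := by
    rw [hR, ← List.append_assoc (List.replicate 1 (0 : Fin 2)) (JC 0 (d 0)), hstepA, hstepC]
    simp only [List.append_assoc]
    rw [← List.append_assoc (List.replicate (d 0 + 1) (0 : Fin 2))
      ((List.ofFn (segF n d σ)).flatten), hfold]
    simp [chunk, List.append_assoc]
  -- all pairs are matched
  have hge : ∀ x ∈ pairsF n K d σ, 1 ≤ x.1 ∧ 1 ≤ x.2 := by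
    intro x hx
    rw [pairsF] at hx
    rcases List.mem_append.1 hx with hx | hx
    · exact pl_ge _ _ x hx
    rcases List.mem_append.1 hx with hx | hx
    · obtain ⟨Lx, hLx, hxL⟩ := List.mem_flatten.1 hx
      obtain ⟨j, hj⟩ := List.mem_ofFn.1 hLx
      rw [← hj, itemsPF] at hxL
      rcases List.mem_cons.1 hxL with rfl | h
      · exact ⟨by omega, by omega⟩
      · exact pl_ge _ _ x h
    · rcases List.mem_cons.1 hx with rfl | h
      · exact ⟨by omega, by omega⟩
      · exact pl_ge _ _ x h
  have hall : ∀ x ∈ pairsF n K d σ, x.1 = x.2 :=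
    mainComb _ hge (by rw [← hw'eq]; exact hmem)
  -- junction equations
  have hjunc : ∀ j : Fin n, paF n d σ j.castSucc = d (σ j).castSucc := by
    intro j
    have hx : ((paF n d σ j.castSucc + 1, d (σ j).castSucc + 1) : ℕ × ℕ)
        ∈ pairsF n K d σ := by
      rw [pairsF]
      refine List.mem_append.2 (Or.inr (List.mem_append.2 (Or.inl ?_)))
      refine List.mem_flatten.2 ⟨itemsPF n d σ j, List.mem_ofFn.2 ⟨j, rfl⟩, ?_⟩
      rw [itemsPF]
      exact List.mem_cons_self
    have := hall _ hx
    simpa using this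
  -- conclude σ = 1
  have hdinj : Function.Injective d := hd.injective
  have hfix : ∀ (k : ℕ) (hk : k < n), σ ⟨k, hk⟩ = ⟨k, hk⟩ := by
    intro k
    induction k with
    | zero =>
      intro hk
      have h0 := hjunc ⟨0, hk⟩
      have e : ((⟨0, hk⟩ : Fin n).castSucc) = (0 : Fin (n+1)) := rfl
      rw [e, paF_zero] at h0
      have := hdinj h0
      apply Fin.ext
      have hval := congrArg Fin.val this
      simpa using hval.symm
    | succ k ihk =>
      intro hk
      have hk' : k < n := by omega
      have h := hjunc ⟨k+1, hk⟩
      have e : ((⟨k+1, hk⟩ : Fin n).castSucc) = ((⟨k, hk'⟩ : Fin n).succ) := rfl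
      rw [e, paF_succ, ihk hk'] at h
      have := hdinj h
      apply Fin.ext
      have hval := congrArg Fin.val this
      simpa using hval.symm
  apply Equiv.ext
  intro j
  obtain ⟨k, hk⟩ := j
  simpa using hfix k hk

end L1Aux

namespace L1Aux

lemma psplit {Mo : Type} [Monoid Mo] (g : ℕ → Mo) (s a b : ℕ) :
    ((List.range' s (a+b)).map g).prod
      = ((List.range' s a).map g).prod * ((List.range' (s+a) b).map g).prod := by
  rw [← List.range'_append_1, List.map_append, List.prod_append]

lemma Mtake {Mo : Type} [Monoid Mo] (g : ℕ → Mo) (n : ℕ) (d : Fin (n+1) → ℕ)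
    (hd : StrictMono d) :
    ∀ (jj : ℕ) (hj : jj ≤ n),
      ((List.range' (d 0) (d ⟨jj, Nat.lt_succ_of_le hj⟩ - d 0)).map g).prod
        = ((List.ofFn (fun j : Fin n =>
            ((List.range' (d j.castSucc) (d j.succ - d j.castSucc)).map g).prod)).take jj).prod := by
  have hdmono' : ∀ {i j : Fin (n+1)}, i ≤ j → d i ≤ d j := fun h => hd.monotone h
  intro jj
  induction jj with
  | zero =>
    intro hj
    have e : (⟨0, Nat.lt_succ_of_le hj⟩ : Fin (n+1)) = 0 := rfl
    rw [e]
    simp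
  | succ jj ih =>
    intro hj
    have hj' : jj ≤ n := Nat.le_of_succ_le hj
    have hjn : jj < n := hj
    have e1 : d 0 ≤ d ⟨jj, Nat.lt_succ_of_le hj'⟩ := hdmono' (by simp [Fin.le_def])
    have e2 : d ⟨jj, Nat.lt_succ_of_le hj'⟩ ≤ d ⟨jj+1, Nat.lt_succ_of_le hj⟩ :=
      hdmono' (by simp [Fin.le_def])
    have hx0 : d ⟨jj+1, Nat.lt_succ_of_le hj⟩ - d 0
        = (d ⟨jj, Nat.lt_succ_of_le hj'⟩ - d 0)
          + (d ⟨jj+1, Nat.lt_succ_of_le hj⟩ - d ⟨jj, Nat.lt_succ_of_le hj'⟩) := by omega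
    rw [hx0, psplit]
    have hx1 : d 0 + (d ⟨jj, Nat.lt_succ_of_le hj'⟩ - d 0)
        = d ⟨jj, Nat.lt_succ_of_le hj'⟩ := by omega
    rw [hx1, ih hj']
    rw [List.prod_take_succ _ jj (by simpa using hjn)]
    congr 1
    rw [List.getElem_ofFn]
    rfl

lemma prod_decomp {Mo : Type} [Monoid Mo] (g : ℕ → Mo) (n K : ℕ) (d : Fin (n+1) → ℕ)
    (hd : StrictMono d) (hdK : ∀ j, d j ≤ K) :
    ((List.range' 0 K).map g).prod
      = ((List.range' 0 (d 0)).map g).prod *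
        ((List.ofFn fun j : Fin n =>
            ((List.range' (d j.castSucc) (d j.succ - d j.castSucc)).map g).prod).prod
          * ((List.range' (d (Fin.last n)) (K - d (Fin.last n))).map g).prod) := by
  have hPmid : ((List.range' (d 0) (d (Fin.last n) - d 0)).map g).prod
      = (List.ofFn fun j : Fin n =>
          ((List.range' (d j.castSucc) (d j.succ - d j.castSucc)).map g).prod).prod := by
    have h := Mtake g n d hd n le_rfl
    rw [List.take_of_length_le (by simp)] at h
    have e : (⟨n, Nat.lt_succ_of_le le_rfl⟩ : Fin (n+1)) = Fin.last n := rfl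
    rw [e] at h
    exact h
  have h01 : d 0 ≤ d (Fin.last n) := hd.monotone (Fin.zero_le _)
  have h02 : d (Fin.last n) ≤ K := hdK _
  have e : K = d 0 + ((d (Fin.last n) - d 0) + (K - d (Fin.last n))) := by omega
  conv_lhs => rw [e]
  rw [psplit g 0 (d 0) ((d (Fin.last n) - d 0) + (K - d (Fin.last n))), Nat.zero_add,
    psplit g (d 0) (d (Fin.last n) - d 0) (K - d (Fin.last n))]
  rw [show d 0 + (d (Fin.last n) - d 0) = d (Fin.last n) from by omega]
  rw [hPmid]


end L1Aux

set_option maxHeartbeats 1600000 in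
open L1Aux in
/-- Let `M` be a finitely generated permutable monoid. Then the language
`L₁* = {aⁿbⁿ : n ≥ 1}*` does not belong to `𝔏_Rat(M)`. -/
theorem L1_star_not_mem_LRat
    (M : Type) [Monoid M] (hfg : Monoid.FG M) (hperm : Permutable M) :
    KStar.kstar LangL1 ∉ LRat (Fin 2) M := by
  classical
  rintro ⟨A, hA⟩
  obtain ⟨n, hn2, hnp⟩ := hperm
  haveI := A.fintypeQ
  set K := Fintype.card A.Q * n with hK
  -- the witness word  a¹b¹ a²b² ⋯ a^{K+1}b^{K+1}
  have hBJconcat : ∀ u l, BJ u (l+1) = BJ u l ++ blk (u+l) := by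
    intro u l
    simp [BJ, List.range'_1_concat]
  have hw_eq : List.replicate 1 (0:Fin 2) ++ (JC 0 K ++ List.replicate (K+1) 1)
      = BJ 0 (K+1) := by
    have h1 := W1 K 0
    simp only [Nat.zero_add] at h1
    rw [← List.append_assoc, h1, hBJconcat, blk]
    simp [List.append_assoc]
  have hBJmem : ∀ u l, BJ u l ∈ KStar.kstar LangL1 := by
    intro u l
    rw [← cjoin_pl]
    apply cjoin_mem
    intro x hx
    obtain ⟨t, _, rfl⟩ := List.mem_map.1 hx
    exact ⟨by omega, rfl⟩
  have hwmem : List.replicate 1 (0:Fin 2) ++ (JC 0 K ++ List.replicate (K+1) 1)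
      ∈ A.lang := by
    rw [hA, hw_eq]
    exact hBJmem 0 (K+1)
  obtain ⟨qf, hqf, m, hreach, x0, hx0, hx1⟩ := hwmem
  -- split the accepting run into prefix / middle / suffix
  obtain ⟨q1, m1, mr, hm_eq, hre1, hre2⟩ :=
    reaches_split A hreach (List.replicate 1 0) (JC 0 K ++ List.replicate (K+1) 1) rfl
  obtain ⟨q2, m2, m3, hmr_eq, hre3, hre4⟩ :=
    reaches_split A hre2 (JC 0 K) (List.replicate (K+1) 1) rfl
  obtain ⟨st, g, m0, hst0, hstK, hchain, hm2⟩ := chain_extract A Cw K hre3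
  -- pigeonhole: n+1 positions with the same run state
  have hcard : (Finset.univ : Finset A.Q).card * n < (Finset.range (K+1)).card := by
    simp [hK, Finset.card_univ]
  obtain ⟨y, -, hy⟩ := Finset.exists_lt_card_fiber_of_mul_lt_card_of_maps_to
    (f := st) (fun a _ => Finset.mem_univ (st a)) hcard
  obtain ⟨T, hTsub, hTcard⟩ := Finset.exists_subset_card_eq (show n+1 ≤ _ from hy)
  set d : Fin (n+1) → ℕ := fun j => ((T.orderIsoOfFin hTcard) j : ℕ) with hdd
  have hdmono : StrictMono d := fun i j hij =>
    Subtype.coe_lt_coe.2 ((T.orderIsoOfFin hTcard).strictMono hij)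
  have hdprop : ∀ j, st (d j) = y ∧ d j ≤ K := by
    intro j
    have hmemT : d j ∈ T := ((T.orderIsoOfFin hTcard) j).2
    have := Finset.mem_filter.1 (hTsub hmemT)
    exact ⟨this.2, by have := Finset.mem_range.1 this.1; omega⟩
  -- the n loop segments at state y
  set Mseq : Fin n → M :=
    fun j => ((List.range' (d j.castSucc) (d j.succ - d j.castSucc)).map g).prod with hMseq
  have hSloop : ∀ j : Fin n,
      A.Reaches y (JC (d j.castSucc) (d j.succ - d j.castSucc)) (Mseq j) y := by
    intro j
    have hlt : d j.castSucc < d j.succ := hdmono (Fin.castSucc_lt_succ)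
    have h := chain_compose A Cw hchain (d j.succ - d j.castSucc) (d j.castSucc)
      (by have := (hdprop j.succ).2; omega)
    rw [show d j.castSucc + (d j.succ - d j.castSucc) = d j.succ from by omega,
      (hdprop j.castSucc).1, (hdprop j.succ).1] at h
    exact h
  obtain ⟨σ, hσne, hσprod⟩ := hnp Mseq
  -- the run over the permuted word
  have hR0 : A.Reaches A.start (List.replicate 1 (0:Fin 2)) (m1 * m0) (st 0) := by
    have h := reaches_append A hre1 hst0
    simpa using h
  have hleft : A.Reaches (st 0) (JC 0 (d 0)) (((List.range' 0 (d 0)).map g).prod)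
      (st (d 0)) := by
    have h := chain_compose A Cw hchain (d 0) 0 (by have := (hdprop 0).2; omega)
    simpa [JC] using h
  have hmid : A.Reaches y ((List.ofFn (segF n d σ)).flatten)
      ((List.ofFn fun j => Mseq (σ j)).prod) y := by
    have h := loops_join A n (segF n d σ) (fun j => Mseq (σ j))
      (fun j => hSloop (σ j))
    exact h
  have hright : A.Reaches y
      (JC (d (Fin.last n)) (K - d (Fin.last n)))
      (((List.range' (d (Fin.last n)) (K - d (Fin.last n))).map g).prod) q2 := by
    have hlK : d (Fin.last n) ≤ K := (hdprop _).2
    have h := chain_compose A Cw hchain (K - d (Fin.last n)) (d (Fin.last n))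
      (by omega)
    rw [show d (Fin.last n) + (K - d (Fin.last n)) = K from by omega,
      (hdprop (Fin.last n)).1, hstK] at h
    exact h
  have hleft' : A.Reaches (st 0) (JC 0 (d 0)) (((List.range' 0 (d 0)).map g).prod) y := by
    rw [← (hdprop 0).1]
    exact hleft
  have hfull := reaches_append A hR0 (reaches_append A hleft'
    (reaches_append A hmid (reaches_append A hright hre4)))
  -- the product of the permuted run equals the original
  have hPfull : ((List.range' 0 K).map g).prod
      = ((List.range' 0 (d 0)).map g).prod * ((List.ofFn Mseq).prod
        * ((List.range' (d (Fin.last n)) (K - d (Fin.last n))).map g).prod) := by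
    have h := prod_decomp g n K d hdmono (fun j => (hdprop j).2)
    rw [← hMseq] at h
    exact h
  have hm' : (m1 * m0) * (((List.range' 0 (d 0)).map g).prod
      * ((List.ofFn fun j => Mseq (σ j)).prod
        * (((List.range' (d (Fin.last n)) (K - d (Fin.last n))).map g).prod * m3))) = m := by
    rw [← hσprod, hm_eq, hmr_eq, hm2, hPfull]
    simp [mul_assoc]
  rw [hm'] at hfull
  -- the permuted word is accepted, hence in L₁*
  have hw'mem : List.replicate 1 (0:Fin 2) ++ (JC 0 (d 0)
      ++ ((List.ofFn (segF n d σ)).flatten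
        ++ (JC (d (Fin.last n)) (K - d (Fin.last n)) ++ List.replicate (K+1) 1)))
      ∈ KStar.kstar LangL1 := by
    rw [← hA]
    exact ⟨qf, hqf, m, hfull, x0, hx0, hx1⟩
  have hσ1 := final_word n K d hdmono (fun j => (hdprop j).2) σ hw'mem
  exact hσne hσ1
end

section
/- Let I be a proper ideal of a monoid M. Then the family of languages generated by context-free valence grammars over M equals the family generated by context-free valence grammars over the Rees quotient M/I: 𝔏(Val,CF,M) = 𝔏(Val,CF,M/I). -/
/-- A context-free valence grammar over a monoid `M` with terminal alphabet `T`: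
a context-free grammar (finitely many nonterminals, finitely many rules) each of whose
rules `(A, α, m)` rewrites the nonterminal `A` to the string `α ∈ (N ∪ T)*` and carries
the valence `m ∈ M`. -/
structure CFValenceGrammar (T : Type) (M : Type) [Monoid M] where
  NT : Type
  fintypeNT : Fintype NT
  start : NT
  rules : List (NT × List (NT ⊕ T) × M)

namespace CFValenceGrammar

variable {T M : Type} [Monoid M]

/-- One derivation step on pairs (sentential form, accumulated valence). -/
def Produces (G : CFValenceGrammar T M)
    (x y : List (G.NT ⊕ T) × M) : Prop :=
  ∃ r ∈ G.rules, ∃ u v : List (G.NT ⊕ T),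
    x.1 = u ++ Sum.inl r.1 :: v ∧ y.1 = u ++ r.2.1 ++ v ∧ y.2 = x.2 * r.2.2

/-- The derivation relation: the reflexive-transitive closure of `Produces`. -/
def Derives (G : CFValenceGrammar T M) :
    List (G.NT ⊕ T) × M → List (G.NT ⊕ T) × M → Prop :=
  Relation.ReflTransGen G.Produces

/-- The language generated by a context-free valence grammar: terminal words derivable
from the start symbol by a valid derivation, i.e. one whose product of valences is the
identity. -/
def lang (G : CFValenceGrammar T M) : Language T :=
  { w | G.Derives ([Sum.inl G.start], 1) (w.map Sum.inr, 1) }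

end CFValenceGrammar

/-- `𝔏(Val, CF, M)`: the family of languages over the terminal alphabet `T` generated by
context-free valence grammars over `M`. -/
def LValCF (T : Type) (M : Type) [Monoid M] : Set (Language T) :=
  { L | ∃ G : CFValenceGrammar T M, G.lang = L }

/-- The Rees congruence `ρ_I` associated with an ideal `I` of `M`:
`a ρ_I b` iff `a = b` or both `a, b ∈ I`.  The Rees quotient `M/I` is the quotient
monoid `(reesCon I hI).Quotient`. -/
def reesCon {M : Type} [Monoid M] (I : Set M)
    (hI : ∀ a ∈ I, ∀ x y : M, x * a * y ∈ I) : Con M where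
  r a b := a = b ∨ (a ∈ I ∧ b ∈ I)
  iseqv := by
    refine ⟨fun a => Or.inl rfl, ?_, ?_⟩
    · rintro a b (rfl | h)
      · exact Or.inl rfl
      · exact Or.inr ⟨h.2, h.1⟩
    · rintro a b c (rfl | h1) h2
      · exact h2
      · rcases h2 with rfl | h2
        · exact Or.inr h1
        · exact Or.inr ⟨h1.1, h2.2⟩
  mul' := by
    rintro w x y z (rfl | h1) (rfl | h2)
    · exact Or.inl rfl
    · exact Or.inr ⟨by simpa using hI y h2.1 w 1, by simpa using hI z h2.2 w 1⟩
    · exact Or.inr ⟨by simpa using hI w h1.1 1 y, by simpa using hI x h1.2 1 y⟩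
    · exact Or.inr ⟨by simpa using hI w h1.1 1 y, by simpa using hI x h1.2 1 z⟩

section Aux

variable {T M N : Type} [Monoid M] [Monoid N]

/-- Map the valences of a grammar along a function. -/
def mapG (f : M → N) (G : CFValenceGrammar T M) : CFValenceGrammar T N where
  NT := G.NT
  fintypeNT := G.fintypeNT
  start := G.start
  rules := G.rules.map fun r => (r.1, r.2.1, f r.2.2)

lemma mapG_produces (f : M →* N) (G : CFValenceGrammar T M)
    {x y : List (G.NT ⊕ T) × M} (h : G.Produces x y) :
    (mapG f G).Produces (x.1, f x.2) (y.1, f y.2) := by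
  obtain ⟨r, hr, u, v, h1, h2, h3⟩ := h
  exact ⟨(r.1, r.2.1, f r.2.2), List.mem_map.mpr ⟨r, hr, rfl⟩, u, v, h1, h2, by simp [h3]⟩

lemma mapG_derives (f : M →* N) (G : CFValenceGrammar T M)
    {x y : List (G.NT ⊕ T) × M} (h : G.Derives x y) :
    (mapG f G).Derives (x.1, f x.2) (y.1, f y.2) := by
  induction h with
  | refl => exact Relation.ReflTransGen.refl
  | tail _ h ih => exact ih.tail (mapG_produces f G h)

lemma mapG_derives_lift (f : M →* N) (G : CFValenceGrammar T M)
    {x y : List (G.NT ⊕ T) × N} (h : (mapG f G).Derives x y)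
    (m : M) (hm : f m = x.2) :
    ∃ m', f m' = y.2 ∧ G.Derives (x.1, m) (y.1, m') := by
  induction h with
  | refl => exact ⟨m, hm, Relation.ReflTransGen.refl⟩
  | tail _ hstep ih =>
    obtain ⟨m', hm', hd⟩ := ih
    obtain ⟨r, hr, u, v, h1, h2, h3⟩ := hstep
    obtain ⟨r0, hr0, hre⟩ := List.mem_map.mp hr
    subst hre
    refine ⟨m' * r0.2.2, ?_, hd.tail ⟨r0, hr0, u, v, h1, h2, rfl⟩⟩
    rw [map_mul, hm', ← h3]

lemma mapG_lang (f : M →* N) (hf : ∀ m, f m = 1 → m = 1) (G : CFValenceGrammar T M) :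
    (mapG f G).lang = G.lang := by
  ext w
  constructor
  · intro h
    obtain ⟨m', hm', hd⟩ := mapG_derives_lift f G h 1 (map_one f)
    rw [hf m' hm'] at hd
    exact hd
  · intro h
    have := mapG_derives f G h
    simp only [map_one] at this; exact this

end Aux

/-- Let `I` be a proper ideal of a monoid `M`.  Then, over every
terminal alphabet, the family of languages generated by context-free valence grammars
over `M` equals the one generated by context-free valence grammars over the Rees
quotient `M/I`. -/
theorem LValCF_eq_LValCF_reesQuotient
    (M : Type) [Monoid M] (I : Set M)
    (hI : ∀ a ∈ I, ∀ x y : M, x * a * y ∈ I) (hproper : I ≠ Set.univ) :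
    ∀ T : Type, LValCF T M = LValCF T (reesCon I hI).Quotient := by
  intro T
  have h1 : (1 : M) ∉ I := fun h =>
    hproper (Set.eq_univ_of_forall fun x => by simpa using hI 1 h x 1)
  set π := (reesCon I hI).mk' with hπdef
  have hπ : ∀ m : M, π m = 1 → m = 1 := by
    intro m hm
    have : (reesCon I hI) m 1 := Con.eq _ |>.mp (by simpa [hπdef] using hm)
    rcases this with h | h
    · exact h
    · exact absurd h.2 h1
  ext L
  constructor
  · rintro ⟨G, rfl⟩
    exact ⟨mapG π G, mapG_lang π hπ G⟩
  · rintro ⟨G, rfl⟩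
    let s : (reesCon I hI).Quotient → M := Quotient.out
    refine ⟨mapG s G, ?_⟩
    have hsec : ∀ q : (reesCon I hI).Quotient, π (s q) = q := fun q => Quotient.out_eq q
    have hG : mapG (π : M →* (reesCon I hI).Quotient) (mapG s G) = G := by
      obtain ⟨NT, ft, st, rules⟩ := G
      simp only [mapG, List.map_map]
      congr 1
      have : (fun r : NT × List (NT ⊕ T) × (reesCon I hI).Quotient =>
          (r.1, r.2.1, π (s r.2.2))) = id := by
        funext r; simp [hsec]
      simpa [Function.comp_def] using congrArg rules.map this
    calc (mapG s G).lang
        = (mapG (π : M →* (reesCon I hI).Quotient) (mapG s G)).lang :=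
          (mapG_lang π hπ _).symm
      _ = G.lang := by rw [hG]
end
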